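/- Let f : B(0,a) → [0,∞) be an elliptical flat smooth function on a ball in ℝⁿ (positive away from 0, vanishing to infinite order at 0, smooth). If for every m ≥ 1 and every 0 < s < 1 there is a constant Γ_{m,s} with |∇^m f(x)| ≤ Γ_{m,s} f(x)^s for all x ∈ B(0,a), then for every γ > 0 the power f^γ is a smooth function on B(0,a) that is flat at the origin. -/

import Mathlib

open Metric Filter Topology Set


theorem aux_hasFDerivAt_zero {E F : Type} [NormedAddCommGroup E] [NormedSpace ℝ E]
    [NormedAddCommGroup F] [NormedSpace ℝ F] {g : E → F} {U : Set E}
    (hU : IsOpen U) (h0 : (0 : E) ∈ U) (hc : ContinuousOn g U)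
    (hd : ∀ x ∈ U \ {0}, DifferentiableAt ℝ g x)
    (ht : Tendsto (fun x => fderiv ℝ g x) (𝓝[U \ {0}] 0) (𝓝 0)) :
    HasFDerivAt g (0 : E →L[ℝ] F) 0 := by
  rw [hasFDerivAt_iff_isLittleO_nhds_zero]
  rw [Asymptotics.isLittleO_iff]
  intro c hc'
  have htn : Tendsto (fun y => ‖fderiv ℝ g y‖) (𝓝[U \ {0}] 0) (𝓝 0) := by
    simpa using ht.norm
  have hev : ∀ᶠ y in 𝓝[U \ {0}] (0 : E), ‖fderiv ℝ g y‖ < c :=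
    htn.eventually_lt_const hc'
  obtain ⟨ε, εpos, hε⟩ := mem_nhdsWithin_iff.1 hev
  obtain ⟨r1, r1pos, hr1⟩ := Metric.isOpen_iff.1 hU 0 h0
  set r := min ε r1 with hr
  have rpos : 0 < r := lt_min εpos r1pos
  have hrU : ball (0 : E) r ⊆ U := fun y hy => hr1 (ball_subset_ball (min_le_right _ _) hy)
  have hball : ∀ y ∈ ball (0 : E) r, y ≠ 0 → ‖fderiv ℝ g y‖ < c := by
    intro y hy hy0
    exact hε ⟨ball_subset_ball (min_le_left _ _) hy, hrU hy, hy0⟩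
  have claim : ∀ x ∈ ball (0 : E) r, ‖g x - g 0‖ ≤ c * ‖x‖ := by
    intro x hx
    rcases eq_or_ne x 0 with rfl | hx0
    · simp [mul_nonneg hc'.le (norm_nonneg _)]
    · have key : ∀ t ∈ Set.Ioo (0 : ℝ) 1, ‖g x - g (t • x)‖ ≤ c * ‖x - t • x‖ := by
        intro t ht'
        have hSsub : ∀ y ∈ segment ℝ (t • x) x, y ∈ ball (0 : E) r \ {0} := by
          rintro y ⟨u, v, hu, hv, huv, rfl⟩
          have hyx : u • t • x + v • x = (u * t + v) • x := by
            rw [smul_smul, ← add_smul]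
          have hpos' : 0 < u * t + v := by
            rcases eq_or_lt_of_le hv with hv0 | hv0
            · have hu1 : u = 1 := by linarith
              rw [hu1, ← hv0]; simpa using ht'.1
            · have : 0 ≤ u * t := mul_nonneg hu ht'.1.le
              linarith
          have hle1 : u * t + v ≤ 1 := by nlinarith [ht'.2]
          constructor
          · rw [hyx, mem_ball_zero_iff, norm_smul, Real.norm_eq_abs,
              abs_of_pos hpos']
            calc (u * t + v) * ‖x‖ ≤ 1 * ‖x‖ :=
                  mul_le_mul_of_nonneg_right hle1 (norm_nonneg _)
              _ = ‖x‖ := one_mul _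
              _ < r := mem_ball_zero_iff.1 hx
          · rw [hyx]
            simp only [mem_singleton_iff]
            exact smul_ne_zero (ne_of_gt hpos') hx0
        have := (convex_segment (t • x) x).norm_image_sub_le_of_norm_hasFDerivWithin_le
          (f := g) (f' := fun y => fderiv ℝ g y)
          (fun y hy => ((hd y ⟨hrU (hSsub y hy).1, (hSsub y hy).2⟩).hasFDerivAt).hasFDerivWithinAt)
          (fun y hy => (hball y (hSsub y hy).1 (hSsub y hy).2).le)
          (left_mem_segment ℝ _ _) (right_mem_segment ℝ _ _)
        exact this
      have h1 : Tendsto (fun t : ℝ => ‖g x - g (t • x)‖) (𝓝[>] (0 : ℝ))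
          (𝓝 ‖g x - g 0‖) := by
        have hgc : ContinuousAt g 0 := hc.continuousAt (hU.mem_nhds h0)
        have hsm : Tendsto (fun t : ℝ => t • x) (𝓝[>] (0 : ℝ)) (𝓝 (0 : E)) := by
          have : Continuous fun t : ℝ => t • x := continuous_id.smul continuous_const
          have h : Tendsto (fun t : ℝ => t • x) (𝓝[>] (0:ℝ)) (𝓝 ((0:ℝ) • x)) :=
            (this.tendsto 0).mono_left nhdsWithin_le_nhds
          simpa using h
        exact (tendsto_const_nhds.sub (hgc.tendsto.comp hsm)).norm
      have h2 : ∀ᶠ t in 𝓝[>] (0 : ℝ), ‖g x - g (t • x)‖ ≤ c * ‖x‖ := by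
        filter_upwards [Ioo_mem_nhdsGT_of_mem (Set.mem_Ico.2 ⟨le_refl (0:ℝ), one_pos⟩)] with t ht'
        refine (key t ht').trans ?_
        have : ‖x - t • x‖ = (1 - t) * ‖x‖ := by
          rw [show x - t • x = (1 - t) • x by rw [sub_smul, one_smul], norm_smul,
            Real.norm_eq_abs, abs_of_pos (by linarith [ht'.2])]
        rw [this]
        have : (1 - t) * ‖x‖ ≤ ‖x‖ := by nlinarith [norm_nonneg x, ht'.1, ht'.2]
        exact mul_le_mul_of_nonneg_left this hc'.le
      exact le_of_tendsto h1 h2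
  filter_upwards [ball_mem_nhds (0 : E) rpos] with y hy
  simpa using claim y hy

theorem aux_contDiffOn_of_tendsto {E : Type} [NormedAddCommGroup E] [NormedSpace ℝ E] (m : ℕ) :
    ∀ {F : Type} [NormedAddCommGroup F] [NormedSpace ℝ F] (g : E → F) (U : Set E),
      IsOpen U → (0 : E) ∈ U → ContinuousOn g U → ContDiffOn ℝ (⊤ : ℕ∞) g (U \ {0}) →
      (∀ k : ℕ, 1 ≤ k →
        Tendsto (fun x => ‖iteratedFDeriv ℝ k g x‖) (𝓝[U \ {0}] 0) (𝓝 0)) →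
      ContDiffOn ℝ m g U := by
  induction m with
  | zero =>
    intro F _ _ g U hU h0 hc hsm ht
    exact contDiffOn_zero.mpr hc
  | succ m ih =>
    intro F _ _ g U hU h0 hc hsm ht
    have hUo : IsOpen (U \ {0}) := hU.sdiff isClosed_singleton
    have hsm' : ContDiffOn ℝ (⊤ : ℕ∞) g (U \ {0}) := hsm
    have hdiff : ∀ x ∈ U \ {0}, DifferentiableAt ℝ g x := by
      intro x hx
      have h1 : DifferentiableOn ℝ g (U \ {0}) := hsm'.differentiableOn (by simp)
      exact h1.differentiableAt (hUo.mem_nhds hx)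
    have hnorm1 : ∀ x : E, ‖iteratedFDeriv ℝ 1 g x‖ = ‖fderiv ℝ g x‖ := by
      intro x
      rw [← norm_iteratedFDeriv_fderiv, norm_iteratedFDeriv_zero]
    have ht1 : Tendsto (fun x => fderiv ℝ g x) (𝓝[U \ {0}] 0) (𝓝 0) := by
      rw [tendsto_zero_iff_norm_tendsto_zero]
      have := ht 1 le_rfl
      simpa [hnorm1] using this
    have hF0 : HasFDerivAt g (0 : E →L[ℝ] F) 0 := aux_hasFDerivAt_zero hU h0 hc hdiff ht1
    rw [show ((m + 1 : ℕ) : WithTop ℕ∞) = (m : WithTop ℕ∞) + 1 by exact_mod_cast rfl]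
    rw [contDiffOn_succ_iff_fderiv_of_isOpen hU]
    refine ⟨?_, ?_, ?_⟩
    · intro x hx
      rcases eq_or_ne x 0 with rfl | hne
      · exact hF0.differentiableAt.differentiableWithinAt
      · exact (hdiff x ⟨hx, hne⟩).differentiableWithinAt
    · intro h
      exact absurd h (by simp)
    · apply ih (fderiv ℝ g) U hU h0 ?_ ?_ ?_
      · -- ContinuousOn (fderiv ℝ g) U
        intro x hx
        rcases eq_or_ne x 0 with rfl | hne
        · have hval : fderiv ℝ g 0 = 0 := hF0.fderiv
          have hsub : 𝓝[U] (0 : E) ≤ 𝓝[U \ {0}] 0 ⊔ 𝓝[({0} : Set E)] 0 := by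
            rw [← nhdsWithin_union]
            apply nhdsWithin_mono
            intro y hy
            rcases eq_or_ne y 0 with rfl | hy0
            · exact Or.inr rfl
            · exact Or.inl ⟨hy, hy0⟩
          have htend : Tendsto (fderiv ℝ g) (𝓝[U \ {0}] 0 ⊔ 𝓝[({0} : Set E)] 0) (𝓝 0) := by
            rw [tendsto_sup]
            constructor
            · exact ht1
            · rw [nhdsWithin_singleton]
              intro s hs
              simp only [mem_map, mem_pure]
              show fderiv ℝ g 0 ∈ s
              rw [hval]
              exact mem_of_mem_nhds hs
          have : Tendsto (fderiv ℝ g) (𝓝[U] (0 : E)) (𝓝 0) := htend.mono_left hsub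
          unfold ContinuousWithinAt
          rw [hval]
          exact this
        · have hcc : ContinuousOn (fderiv ℝ g) (U \ {0}) :=
            hsm'.continuousOn_fderiv_of_isOpen hUo (by simp)
          exact (hcc.continuousAt (hUo.mem_nhds ⟨hx, hne⟩)).continuousWithinAt
      · -- ContDiffOn ⊤ (fderiv g) (U \ {0})
        exact ((contDiffOn_infty_iff_fderiv_of_isOpen hUo).mp hsm').2
      · intro k hk
        have := ht (k + 1) (by omega)
        have hnk : ∀ x : E, ‖iteratedFDeriv ℝ (k+1) g x‖ = ‖iteratedFDeriv ℝ k (fderiv ℝ g) x‖ :=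
          fun x => (norm_iteratedFDeriv_fderiv).symm
        simpa [hnk] using this


theorem aux_est {E : Type} [NormedAddCommGroup E] [NormedSpace ℝ E]
    {a : ℝ} {f : E → ℝ}
    (hsm : ContDiffOn ℝ (⊤ : ℕ∞) f (ball 0 a))
    (hpos : ∀ x ∈ ball (0 : E) a \ {0}, 0 < f x)
    (hder : ∀ m : ℕ, 1 ≤ m → ∀ s : ℝ, 0 < s → s < 1 → ∃ Γ : ℝ,
      ∀ x ∈ ball (0 : E) a, ‖iteratedFDerivWithin ℝ m f (ball 0 a) x‖ ≤ Γ * f x ^ s)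
    {s : ℝ} (hs0 : 0 < s) (hs1 : s < 1) :
    ∀ (m : ℕ) (β : ℝ), ∃ C : ℝ, 0 ≤ C ∧ ∀ x ∈ ball (0 : E) a \ {0}, f x ≤ 1 →
      ‖iteratedFDeriv ℝ m (fun y => f y ^ β) x‖ ≤ C * f x ^ (β - m * (1 - s)) := by
  intro m
  induction m using Nat.strong_induction_on with
  | _ m ih =>
  obtain _ | m' := m
  · intro β
    refine ⟨1, zero_le_one, fun x hx hf1 => ?_⟩
    rw [norm_iteratedFDeriv_zero, Real.norm_eq_abs,
      abs_of_nonneg (Real.rpow_nonneg (hpos x hx).le β)]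
    simp
  intro β
  have hVo : IsOpen (ball (0 : E) a \ {0}) := isOpen_ball.sdiff isClosed_singleton
  have hVsub : ball (0 : E) a \ {0} ⊆ ball (0 : E) a := diff_subset
  have hfA : ∀ x ∈ ball (0 : E) a \ {0}, ContDiffAt ℝ (⊤ : ℕ∞) f x := fun x hx =>
    hsm.contDiffAt (isOpen_ball.mem_nhds hx.1)
  -- choose Γ's
  have hΓex : ∀ k : ℕ, ∃ Γ : ℝ, 0 ≤ Γ ∧ (1 ≤ k → ∀ x ∈ ball (0 : E) a \ {0},
      ‖iteratedFDerivWithin ℝ k f (ball 0 a) x‖ ≤ Γ * f x ^ s) := by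
    intro k
    rcases Nat.eq_zero_or_pos k with rfl | hk
    · exact ⟨0, le_rfl, fun h => absurd h (by omega)⟩
    · obtain ⟨Γ, hΓ⟩ := hder k hk s hs0 hs1
      refine ⟨max Γ 0, le_max_right _ _, fun _ x hx => (hΓ x (hVsub hx)).trans ?_⟩
      exact mul_le_mul_of_nonneg_right (le_max_left _ _)
        (Real.rpow_nonneg (hpos x hx).le s)
  choose Γf hΓ0 hΓb using hΓex
  -- choose IH constants
  have hIHex : ∀ i : ℕ, ∃ C : ℝ, 0 ≤ C ∧ (i ≤ m' → ∀ x ∈ ball (0 : E) a \ {0}, f x ≤ 1 →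
      ‖iteratedFDeriv ℝ i (fun y => f y ^ (β - 1)) x‖ ≤ C * f x ^ ((β - 1) - i * (1 - s))) := by
    intro i
    rcases le_or_gt i m' with hi | hi
    · obtain ⟨C, hC0, hC⟩ := ih i (by omega) (β - 1)
      exact ⟨C, hC0, fun _ => hC⟩
    · exact ⟨0, le_rfl, fun h => absurd h (by omega)⟩
  choose Cf hC0 hCb using hIHex
  refine ⟨∑ i ∈ Finset.range (m' + 1),
    (m'.choose i : ℝ) * Cf i * (|β| * Γf (m' + 1 - i)), ?_, ?_⟩
  · apply Finset.sum_nonneg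
    intro i _
    exact mul_nonneg (mul_nonneg (by positivity) (hC0 i))
      (mul_nonneg (abs_nonneg β) (hΓ0 _))
  intro x hx hf1
  have hfx : 0 < f x := hpos x hx
  -- smoothness facts
  have hc_cd : ContDiffOn ℝ (⊤ : ℕ∞) (fun y => f y ^ (β - 1)) (ball (0 : E) a \ {0}) := by
    intro y hy
    have h1 : ContDiffAt ℝ (⊤ : ℕ∞) (fun t : ℝ => t ^ (β - 1)) (f y) :=
      Real.contDiffAt_rpow_const_of_ne (ne_of_gt (hpos y hy))
    exact (h1.comp y (hfA y hy)).contDiffWithinAt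
  have hfd_cd : ContDiffOn ℝ (⊤ : ℕ∞) (fderiv ℝ f) (ball (0 : E) a \ {0}) :=
    ((contDiffOn_infty_iff_fderiv_of_isOpen hVo).mp (hsm.mono hVsub)).2
  have hψ_cd : ContDiffOn ℝ (⊤ : ℕ∞) (fun y => β • fderiv ℝ f y) (ball (0 : E) a \ {0}) :=
    hfd_cd.const_smul β
  -- derivative formula
  have hEq : ∀ y ∈ ball (0 : E) a \ {0},
      fderiv ℝ (fun z => f z ^ β) y = (f y ^ (β - 1)) • (β • fderiv ℝ f y) := by
    intro y hy
    have hdf : HasFDerivAt f (fderiv ℝ f y) y :=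
      ((hfA y hy).differentiableAt (by simp)).hasFDerivAt
    have hg : HasDerivAt (fun t : ℝ => t ^ β) (β * f y ^ (β - 1)) (f y) :=
      Real.hasDerivAt_rpow_const (Or.inl (ne_of_gt (hpos y hy)))
    have h2 : HasFDerivAt (fun z => f z ^ β)
        ((β * f y ^ (β - 1)) • fderiv ℝ f y) y := hg.comp_hasFDerivAt y hdf
    rw [h2.fderiv, smul_smul, mul_comm]
  -- main chain
  have key : ‖iteratedFDeriv ℝ (m' + 1) (fun y => f y ^ β) x‖
      = ‖iteratedFDerivWithin ℝ m'
          (fun y => (f y ^ (β - 1)) • (β • fderiv ℝ f y)) (ball (0 : E) a \ {0}) x‖ := by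
    rw [← norm_iteratedFDeriv_fderiv,
      ← iteratedFDerivWithin_of_isOpen (f := fderiv ℝ (fun z => f z ^ β)) m' hVo hx,
      iteratedFDerivWithin_congr (fun y hy => hEq y hy) hx]
  rw [key]
  have hmain := norm_iteratedFDerivWithin_smul_le (𝕜 := ℝ)
    hc_cd hψ_cd hVo.uniqueDiffOn hx (n := m') (ENat.natCast_le_of_coe_top_le_withTop le_rfl m')
  refine hmain.trans ?_
  rw [Finset.sum_mul]
  apply Finset.sum_le_sum
  intro i hi
  have him : i ≤ m' := Nat.lt_succ_iff.mp (Finset.mem_range.mp hi)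
  -- factor 1
  have h1 : ‖iteratedFDerivWithin ℝ i (fun y => f y ^ (β - 1)) (ball (0 : E) a \ {0}) x‖
      ≤ Cf i * f x ^ ((β - 1) - i * (1 - s)) := by
    rw [iteratedFDerivWithin_of_isOpen i hVo hx]
    exact hCb i him x hx hf1
  -- factor 2
  have h2 : ‖iteratedFDerivWithin ℝ (m' - i) (fun y => β • fderiv ℝ f y)
      (ball (0 : E) a \ {0}) x‖ ≤ |β| * (Γf (m' + 1 - i) * f x ^ s) := by
    have e1 : iteratedFDerivWithin ℝ (m' - i) (β • fderiv ℝ f)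
        (ball (0 : E) a \ {0}) x
        = β • iteratedFDerivWithin ℝ (m' - i) (fderiv ℝ f) (ball (0 : E) a \ {0}) x :=
      iteratedFDerivWithin_const_smul_apply ((hfd_cd.of_le (ENat.natCast_le_of_coe_top_le_withTop le_rfl (m' - i))) x hx) hVo.uniqueDiffOn hx
    rw [show (fun y => β • fderiv ℝ f y) = β • (fderiv ℝ f) from rfl, e1,
      show ‖β • iteratedFDerivWithin ℝ (m' - i) (fderiv ℝ f) (ball (0 : E) a \ {0}) x‖
          = |β| * ‖iteratedFDerivWithin ℝ (m' - i) (fderiv ℝ f) (ball (0 : E) a \ {0}) x‖ by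
        rw [← Real.norm_eq_abs]
        exact norm_smul β (iteratedFDerivWithin ℝ (m' - i) (fderiv ℝ f) (ball (0 : E) a \ {0}) x)]
    apply mul_le_mul_of_nonneg_left _ (abs_nonneg β)
    rw [iteratedFDerivWithin_of_isOpen _ hVo hx, norm_iteratedFDeriv_fderiv,
      ← iteratedFDerivWithin_of_isOpen (m' - i + 1) isOpen_ball hx.1,
      show m' - i + 1 = m' + 1 - i by omega]
    exact hΓb (m' + 1 - i) (by omega) x hx
  -- combine
  have hnn1 : (0 : ℝ) ≤ ‖iteratedFDerivWithin ℝ i (fun y => f y ^ (β - 1))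
      (ball (0 : E) a \ {0}) x‖ := norm_nonneg _
  calc (m'.choose i : ℝ)
        * ‖iteratedFDerivWithin ℝ i (fun y => f y ^ (β - 1)) (ball (0 : E) a \ {0}) x‖
        * ‖iteratedFDerivWithin ℝ (m' - i) (fun y => β • fderiv ℝ f y)
            (ball (0 : E) a \ {0}) x‖
      ≤ (m'.choose i : ℝ) * (Cf i * f x ^ ((β - 1) - i * (1 - s)))
        * (|β| * (Γf (m' + 1 - i) * f x ^ s)) := by
        apply mul_le_mul
        · exact mul_le_mul_of_nonneg_left h1 (by positivity)
        · exact h2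
        · exact norm_nonneg _
        · have h3 : (0:ℝ) ≤ f x ^ ((β - 1) - i * (1 - s)) := Real.rpow_nonneg hfx.le _
          exact mul_nonneg (by positivity) (mul_nonneg (hC0 i) h3)
    _ = ((m'.choose i : ℝ) * Cf i * (|β| * Γf (m' + 1 - i)))
        * (f x ^ ((β - 1) - i * (1 - s)) * f x ^ s) := by ring
    _ = ((m'.choose i : ℝ) * Cf i * (|β| * Γf (m' + 1 - i)))
        * f x ^ (((β - 1) - i * (1 - s)) + s) := by
        rw [← Real.rpow_add hfx]
    _ ≤ ((m'.choose i : ℝ) * Cf i * (|β| * Γf (m' + 1 - i)))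
        * f x ^ (β - (m' + 1 : ℕ) * (1 - s)) := by
        apply mul_le_mul_of_nonneg_left _
          (mul_nonneg (mul_nonneg (by positivity) (hC0 i))
            (mul_nonneg (abs_nonneg β) (hΓ0 _)))
        apply Real.rpow_le_rpow_of_exponent_ge hfx hf1
        have hi' : (i : ℝ) + 1 ≤ (m' : ℝ) + 1 := by exact_mod_cast Nat.succ_le_succ him
        have hs' : (0 : ℝ) ≤ 1 - s := by linarith
        push_cast
        nlinarith [mul_le_mul_of_nonneg_right hi' hs']

/-- If `f` is an elliptical flat smooth nonnegative function on a ball `B(0,a) ⊆ ℝⁿ`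
satisfying the derivative estimates `|∇^m f(x)| ≤ Γ_{m,s} f(x)^s` for all `m ≥ 1` and
all `0 < s < 1`, then for every `γ > 0` the power `f^γ` is smooth on the ball and flat
at the origin. -/
theorem powers_smooth_of_derivative_bounds (n : ℕ) (a : ℝ) (ha : 0 < a)
    (f : EuclideanSpace ℝ (Fin n) → ℝ)
    (hf0 : ∀ x ∈ ball (0 : EuclideanSpace ℝ (Fin n)) a, 0 ≤ f x)
    (hell : ∀ x ∈ ball (0 : EuclideanSpace ℝ (Fin n)) a, x ≠ 0 → 0 < f x)
    (hsm : ContDiffOn ℝ (⊤ : ℕ∞) f (ball 0 a))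
    (hflat : ∀ N : ℕ,
      Tendsto (fun x => f x / ‖x‖ ^ N)
        (𝓝[ball (0 : EuclideanSpace ℝ (Fin n)) a \ {0}] 0) (𝓝 0))
    (hder : ∀ m : ℕ, 1 ≤ m → ∀ s : ℝ, 0 < s → s < 1 → ∃ Γ : ℝ,
      ∀ x ∈ ball (0 : EuclideanSpace ℝ (Fin n)) a,
        ‖iteratedFDerivWithin ℝ m f (ball 0 a) x‖ ≤ Γ * f x ^ s) :
    ∀ γ : ℝ, 0 < γ →
      ContDiffOn ℝ (⊤ : ℕ∞) (fun x => f x ^ γ) (ball 0 a) ∧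
      ∀ N : ℕ,
        Tendsto (fun x => f x ^ γ / ‖x‖ ^ N)
          (𝓝[ball (0 : EuclideanSpace ℝ (Fin n)) a \ {0}] 0) (𝓝 0) := by
  intro γ hγ
  rcases subsingleton_or_nontrivial (EuclideanSpace ℝ (Fin n)) with hsub | hnt
  · constructor
    · have heq : (fun x : EuclideanSpace ℝ (Fin n) => f x ^ γ) = fun _ => f 0 ^ γ := by
        funext x; rw [Subsingleton.elim x 0]
      rw [heq]; exact contDiffOn_const
    · intro N
      have hempty : ball (0 : EuclideanSpace ℝ (Fin n)) a \ {0} = ∅ := by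
        ext x
        simp [Subsingleton.elim x (0 : EuclideanSpace ℝ (Fin n))]
      rw [hempty, nhdsWithin_empty]
      exact tendsto_bot
  · have h0ball : (0 : EuclideanSpace ℝ (Fin n)) ∈ ball (0 : EuclideanSpace ℝ (Fin n)) a :=
      mem_ball_self ha
    have hpos : ∀ x ∈ ball (0 : EuclideanSpace ℝ (Fin n)) a \ {0}, 0 < f x :=
      fun x hx => hell x hx.1 hx.2
    -- f tends to 0
    have hf_to0 : Tendsto f (𝓝[ball (0 : EuclideanSpace ℝ (Fin n)) a \ {0}] 0) (𝓝 0) := by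
      have := hflat 0
      simpa using this
    -- continuity of the power on the ball
    have hrpow_cont : Continuous fun t : ℝ => t ^ γ :=
      continuous_iff_continuousAt.mpr fun t => Real.continuousAt_rpow_const t γ (Or.inr hγ.le)
    have hgcont : ContinuousOn (fun x => f x ^ γ) (ball (0 : EuclideanSpace ℝ (Fin n)) a) :=
      hrpow_cont.comp_continuousOn hsm.continuousOn
    -- smoothness away from 0
    have hgsm : ContDiffOn ℝ (⊤ : ℕ∞) (fun x => f x ^ γ)
        (ball (0 : EuclideanSpace ℝ (Fin n)) a \ {0}) := by
      intro x hx
      have h1 : ContDiffAt ℝ (⊤ : ℕ∞) (fun t : ℝ => t ^ γ) (f x) :=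
        Real.contDiffAt_rpow_const_of_ne (ne_of_gt (hpos x hx))
      exact (h1.comp x (hsm.contDiffAt (isOpen_ball.mem_nhds hx.1))).contDiffWithinAt
    -- eventually f ≤ 1
    have hev1 : ∀ᶠ x in 𝓝[ball (0 : EuclideanSpace ℝ (Fin n)) a \ {0}] 0, f x ≤ 1 :=
      (hf_to0.eventually_lt_const one_pos).mono fun x h => h.le
    -- decay of iterated derivatives of the power
    have hder_decay : ∀ k : ℕ, 1 ≤ k →
        Tendsto (fun x => ‖iteratedFDeriv ℝ k (fun y => f y ^ γ) x‖)
          (𝓝[ball (0 : EuclideanSpace ℝ (Fin n)) a \ {0}] 0) (𝓝 0) := by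
      intro k hk
      have hk1 : (1 : ℝ) ≤ (k : ℝ) := by exact_mod_cast hk
      have hmin : 0 < min γ 1 := lt_min hγ one_pos
      have h2k : (0 : ℝ) < 2 * k := by linarith
      set s : ℝ := 1 - min γ 1 / (2 * k) with hs
      have hs1 : s < 1 := by
        rw [hs]
        have : 0 < min γ 1 / (2 * k) := div_pos hmin h2k
        linarith
      have hs0 : 0 < s := by
        rw [hs]
        have : min γ 1 / (2 * k) ≤ 1 / 2 := by
          rw [div_le_iff₀ h2k]
          nlinarith [min_le_right γ 1]
        linarith
      have h1s : (k : ℝ) * (1 - s) = min γ 1 / 2 := by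
        rw [hs]
        field_simp
        ring
      have hδ : 0 < γ - k * (1 - s) := by
        rw [h1s]
        have := min_le_left γ 1
        linarith
      obtain ⟨C, hC0, hC⟩ := aux_est hsm hpos hder hs0 hs1 k γ
      have hfd : Tendsto (fun x => f x ^ (γ - k * (1 - s)))
          (𝓝[ball (0 : EuclideanSpace ℝ (Fin n)) a \ {0}] 0) (𝓝 0) := by
        have hcA : ContinuousAt (fun t : ℝ => t ^ (γ - k * (1 - s))) 0 :=
          Real.continuousAt_rpow_const 0 _ (Or.inr hδ.le)
        have := hcA.tendsto.comp hf_to0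
        simpa [Function.comp_def, Real.zero_rpow (ne_of_gt hδ)] using this
      apply squeeze_zero' (Filter.Eventually.of_forall fun x => norm_nonneg _)
      · filter_upwards [hev1, eventually_mem_nhdsWithin] with x h1 hxV
        exact hC x hxV h1
      · simpa using hfd.const_mul C
    constructor
    · exact contDiffOn_infty.mpr fun m =>
        aux_contDiffOn_of_tendsto m _ _ isOpen_ball h0ball hgcont hgsm hder_decay
    · -- flatness of the power
      intro N
      set M : ℕ := ⌈(N : ℝ) / γ⌉₊ with hM
      have hMγ : (N : ℝ) ≤ (M : ℝ) * γ := by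
        have h1 : (N : ℝ) / γ ≤ M := Nat.le_ceil _
        calc (N : ℝ) = (N : ℝ) / γ * γ := by field_simp
          _ ≤ (M : ℝ) * γ := mul_le_mul_of_nonneg_right h1 hγ.le
      set e : ℝ := (M : ℝ) * γ - (N : ℝ) with he
      have he0 : 0 ≤ e := by rw [he]; linarith
      have h2 : Tendsto (fun x => (f x / ‖x‖ ^ M) ^ γ)
          (𝓝[ball (0 : EuclideanSpace ℝ (Fin n)) a \ {0}] 0) (𝓝 0) := by
        have hcA : ContinuousAt (fun t : ℝ => t ^ γ) 0 :=
          Real.continuousAt_rpow_const 0 γ (Or.inr hγ.le)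
        have := hcA.tendsto.comp (hflat M)
        simpa [Function.comp_def, Real.zero_rpow (ne_of_gt hγ)] using this
      set K : ℝ := max 1 (a ^ e) with hK
      apply squeeze_zero' (g := fun x => (f x / ‖x‖ ^ M) ^ γ * K)
      · filter_upwards [eventually_mem_nhdsWithin] with x hx
        exact div_nonneg (Real.rpow_nonneg (hf0 x hx.1) γ) (pow_nonneg (norm_nonneg x) N)
      · filter_upwards [eventually_mem_nhdsWithin] with x hx
        have hx0 : x ≠ 0 := hx.2
        have hxn : 0 < ‖x‖ := norm_pos_iff.mpr hx0
        have hxa : ‖x‖ < a := mem_ball_zero_iff.1 hx.1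
        have hf0x : 0 ≤ f x := hf0 x hx.1
        have heq : f x ^ γ / ‖x‖ ^ N = (f x / ‖x‖ ^ M) ^ γ * ‖x‖ ^ e := by
          rw [Real.div_rpow hf0x (pow_nonneg hxn.le M),
            ← Real.rpow_natCast ‖x‖ M, ← Real.rpow_natCast ‖x‖ N,
            ← Real.rpow_mul hxn.le, he,
            Real.rpow_sub hxn ((M : ℝ) * γ) (N : ℝ)]
          have hne1 : ‖x‖ ^ ((M : ℝ) * γ) ≠ 0 := (Real.rpow_pos_of_pos hxn _).ne'
          have hne2 : ‖x‖ ^ ((N : ℕ) : ℝ) ≠ 0 := (Real.rpow_pos_of_pos hxn _).ne'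
          field_simp
        rw [heq]
        have hKb : ‖x‖ ^ e ≤ K := by
          rcases le_or_gt ‖x‖ 1 with h | h
          · exact le_trans (Real.rpow_le_one (norm_nonneg x) h he0) (le_max_left _ _)
          · exact le_trans (Real.rpow_le_rpow (norm_nonneg x) hxa.le he0) (le_max_right _ _)
        exact mul_le_mul_of_nonneg_left hKb
          (Real.rpow_nonneg (div_nonneg hf0x (pow_nonneg (norm_nonneg x) M)) γ)
      · simpa using h2.mul_const K
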